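/- arXiv:2404.00607 — 3 statements merged into one kernel-verified Lean document; each statement's English description precedes it below -/
import Mathlib

section
/- For every n ≥ 1 and every subset I ⊆ {1,...,n-1}, the number of permutations σ of {1,...,n} whose succession set {i ∈ [n-1] : σ(i)+1 = σ(i+1)} equals I is the same as the number of permutations σ of {1,...,n} whose set of fixed points distinct from n, {i ∈ [n-1] : σ(i) = i}, equals I. -/
/-! For every `J` with `i + 1 < n` for all `i ∈ J`, both the permutations whose succession set
contains `J` and those fixing `J` pointwise number `(n - #J)!`. For fixed points this is just the
symmetric group on the complement of `J`. For successions, let `m` be the largest element of `J`: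
deleting position `m + 1` together with its value `σ m + 1`, and closing up the gaps, is a
bijection onto the permutations of `n - 1` points with successions at `J \ {m}`.
The counts `#{σ | J ⊆ S σ}` over all `J` determine the counts `#{σ | S σ = I}` by downward
induction on `I`, so the exact counts agree as well. -/

open Finset

/-- Successions: positions `i` (0-based) such that `τ(i)+1 = τ(i+1)`. -/
def Suc {n : ℕ} (τ : Equiv.Perm (Fin n)) : Finset (Fin n) :=
  univ.filter (fun i => ∃ j : Fin n, (j : ℕ) = (i : ℕ) + 1 ∧ (τ i : ℕ) + 1 = (τ j : ℕ))

/-- Non-adjacent successions: positions `i` such that `τ(i)+1` occurs at some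
position `j ≥ i+2`. -/
def najSuc {n : ℕ} (τ : Equiv.Perm (Fin n)) : Finset (Fin n) :=
  univ.filter (fun i => ∃ j : Fin n, (i : ℕ) + 2 ≤ (j : ℕ) ∧ (τ j : ℕ) = (τ i : ℕ) + 1)

/-- Predecessors: positions `i` such that `τ(i)+1` occurs at some earlier position. -/
def PredSet {n : ℕ} (τ : Equiv.Perm (Fin n)) : Finset (Fin n) :=
  univ.filter (fun i => ∃ j : Fin n, j < i ∧ (τ j : ℕ) = (τ i : ℕ) + 1)

/-- Fixed points distinct from the last position. -/
def Fixbar {n : ℕ} (σ : Equiv.Perm (Fin n)) : Finset (Fin n) :=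
  univ.filter (fun i => (i : ℕ) + 1 < n ∧ σ i = i)

/-- Drop values `σ(i) < i` over positions other than the last. -/
def Dropbar {n : ℕ} (σ : Equiv.Perm (Fin n)) : Finset (Fin n) :=
  univ.filter (fun v => ∃ i : Fin n, (i : ℕ) + 1 < n ∧ σ i = v ∧ (σ i : ℕ) < (i : ℕ))

/-- Excedance values `σ(i) > i` over positions other than the last. -/
def Excbar {n : ℕ} (σ : Equiv.Perm (Fin n)) : Finset (Fin n) :=
  univ.filter (fun v => ∃ i : Fin n, (i : ℕ) + 1 < n ∧ σ i = v ∧ (i : ℕ) < (σ i : ℕ))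

open Equiv Nat

section SupersetCounts

variable {α β : Type*} [Fintype α] [DecidableEq α] [Fintype β]

theorem card_filter_subset_eq_sum (s : β → Finset α) (I : Finset α) :
    #{b | I ⊆ s b} = ∑ K with I ⊆ K, #{b | s b = K} := by
  rw [card_eq_sum_card_fiberwise (f := s) (t := {K | I ⊆ K}) fun b hb => by simpa using hb]
  refine sum_congr rfl fun K hK => ?_
  rw [filter_filter]
  exact congrArg card
    (filter_congr fun b _ => and_iff_right_of_imp fun h => h ▸ (mem_filter.1 hK).2)

theorem card_filter_eq_of_card_filter_subset_eq {γ : Type*} [Fintype γ] (s : β → Finset α)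
    (t : γ → Finset α) (h : ∀ J, #{b | J ⊆ s b} = #{c | J ⊆ t c}) (I : Finset α) :
    #{b | s b = I} = #{c | t c = I} := by
  induction hk : #Iᶜ using Nat.strong_induction_on generalizing I with
  | _ k ih =>
  have hI : I ∈ ({K | I ⊆ K} : Finset (Finset α)) := by simp
  have hsupersets := h I
  rw [card_filter_subset_eq_sum, card_filter_subset_eq_sum, ← add_sum_erase _ _ hI,
    ← add_sum_erase _ _ hI] at hsupersets
  refine Nat.add_right_cancel (hsupersets.trans (congrArg _ (sum_congr rfl fun K hK => ?_)))
  have hIK : I ⊂ K :=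
    (mem_filter.1 (mem_of_mem_erase hK)).2.ssubset_of_ne (ne_of_mem_erase hK).symm
  exact (ih _ (hk ▸ card_lt_card (compl_ssubset_compl.2 hIK)) K rfl).symm

end SupersetCounts

theorem Equiv.Perm.card_forall_mem_fixed {α : Type*} [Fintype α] [DecidableEq α]
    (s : Finset α) :
    Fintype.card {σ : Perm α // ∀ a ∈ s, σ a = a} = (Fintype.card α - #s)! := by
  have hfix : ∀ σ : Perm α, (∀ a ∈ s, σ a = a) ↔ ∀ a, ¬a ∉ s → σ a = a := by simp
  simp_rw [hfix]
  rw [← Fintype.card_congr (Perm.subtypeEquivSubtypePerm (· ∉ s)), Fintype.card_perm,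
    Fintype.card_subtype_compl, Fintype.card_coe]

namespace Fin

variable {n : ℕ}

theorem val_succAbove (p : Fin (n + 1)) (i : Fin n) :
    (p.succAbove i : ℕ) = if (i : ℕ) < p then (i : ℕ) else (i : ℕ) + 1 := by
  simp only [succAbove, lt_def, val_castSucc]
  split_ifs <;> rfl

theorem val_succAbove_add_one_eq_iff {p : Fin (n + 1)} {i j : Fin n}
    (h : (p.succAbove i : ℕ) + 1 ≠ p) :
    (p.succAbove i : ℕ) + 1 = p.succAbove j ↔ (i : ℕ) + 1 = j := by
  simp only [val_succAbove] at h ⊢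
  split_ifs at h ⊢ <;> omega

end Fin

namespace Equiv.Perm

variable {n : ℕ}

/-- The permutation sending `p` to `v` and acting as `σ` on the remaining points, which are
identified with `Fin n` in an order-preserving way on both sides. -/
def insertAt (p v : Fin (n + 1)) (σ : Perm (Fin n)) : Perm (Fin (n + 1)) :=
  (finSuccEquiv' p).trans (σ.optionCongr.trans (finSuccEquiv' v).symm)

def removeAt (p : Fin (n + 1)) (σ : Perm (Fin (n + 1))) : Perm (Fin n) :=
  removeNone ((finSuccEquiv' p).symm.trans (σ.trans (finSuccEquiv' (σ p))))

@[simp]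
theorem insertAt_apply_self (p v : Fin (n + 1)) (σ : Perm (Fin n)) : insertAt p v σ p = v := by
  simp [insertAt, finSuccEquiv'_at]

@[simp]
theorem insertAt_apply_succAbove (p v : Fin (n + 1)) (σ : Perm (Fin n)) (i : Fin n) :
    insertAt p v σ (p.succAbove i) = v.succAbove (σ i) := by
  simp [insertAt, finSuccEquiv'_succAbove]

theorem succAbove_removeAt_apply (p : Fin (n + 1)) (σ : Perm (Fin (n + 1))) (i : Fin n) :
    (σ p).succAbove (removeAt p σ i) = σ (p.succAbove i) := by
  obtain ⟨j, hj⟩ := Fin.exists_succAbove_eq fun h => Fin.succAbove_ne p i (σ.injective h)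
  have hsome :
      ((finSuccEquiv' p).symm.trans (σ.trans (finSuccEquiv' (σ p)))) (some i) = some j := by
    simp [← hj, finSuccEquiv'_succAbove]
  have hremove : removeAt p σ i = j :=
    Option.some_injective _ (hsome ▸ removeNone_some _ ⟨j, hsome⟩)
  rw [hremove, hj]

theorem insertAt_removeAt (p : Fin (n + 1)) (σ : Perm (Fin (n + 1))) :
    insertAt p (σ p) (removeAt p σ) = σ := by
  ext y
  rcases eq_or_ne y p with rfl | hy
  · rw [insertAt_apply_self]
  · obtain ⟨i, rfl⟩ := Fin.exists_succAbove_eq hy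
    rw [insertAt_apply_succAbove, succAbove_removeAt_apply]

theorem removeAt_insertAt (p v : Fin (n + 1)) (σ : Perm (Fin n)) :
    removeAt p (insertAt p v σ) = σ := by
  ext i
  have h := succAbove_removeAt_apply p (insertAt p v σ) i
  rw [insertAt_apply_self, insertAt_apply_succAbove] at h
  rw [Fin.succAbove_right_injective h]

end Equiv.Perm

open Equiv.Perm

section Successions

variable {n : ℕ}

theorem mem_Suc {σ : Perm (Fin n)} {i : Fin n} :
    i ∈ Suc σ ↔ ∃ j : Fin n, (j : ℕ) = i + 1 ∧ (σ i : ℕ) + 1 = σ j := by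
  simp [Suc]

/-- `hστ` says that `τ` is `σ` with position `p` and value `σ p` deleted. -/
theorem succAbove_mem_Suc_iff {σ : Perm (Fin (n + 1))} {τ : Perm (Fin n)} {p : Fin (n + 1)}
    (hστ : ∀ x, σ (p.succAbove x) = (σ p).succAbove (τ x)) {i : Fin n}
    (hp : (p.succAbove i : ℕ) + 1 ≠ p) (hv : (σ (p.succAbove i) : ℕ) + 1 ≠ σ p) :
    p.succAbove i ∈ Suc σ ↔ i ∈ Suc τ := by
  rw [hστ] at hv
  simp only [mem_Suc, hστ]
  constructor
  · rintro ⟨j, hj, hσj⟩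
    obtain ⟨k, rfl⟩ := Fin.exists_succAbove_eq (x := j) (y := p) fun h => hp (by rw [← hj, h])
    exact ⟨k, ((Fin.val_succAbove_add_one_eq_iff hp).1 hj.symm).symm,
      (Fin.val_succAbove_add_one_eq_iff hv).1 (by rwa [hστ] at hσj)⟩
  · rintro ⟨k, hk, hτk⟩
    exact ⟨p.succAbove k, ((Fin.val_succAbove_add_one_eq_iff hp).2 hk.symm).symm, by
      rw [hστ]; exact (Fin.val_succAbove_add_one_eq_iff hv).2 hτk⟩

theorem castSucc_mem_Suc_iff {σ : Perm (Fin (n + 1))} {m : Fin n} :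
    m.castSucc ∈ Suc σ ↔ (σ m.castSucc : ℕ) + 1 = σ m.succ := by
  rw [mem_Suc]
  constructor
  · rintro ⟨j, hj, hσj⟩
    rwa [show j = m.succ from Fin.ext hj] at hσj
  · exact fun h => ⟨m.succ, rfl, h⟩

theorem castSucc_mem_Suc_iff_mem_Suc_removeAt {σ : Perm (Fin (n + 1))} {m x : Fin n}
    (hσm : (σ m.castSucc : ℕ) + 1 = σ m.succ) (hx : x < m) :
    x.castSucc ∈ Suc σ ↔ x ∈ Suc (removeAt m.succ σ) := by
  rw [← Fin.succAbove_succ_of_le _ _ hx.le]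
  refine succAbove_mem_Suc_iff (fun y => (succAbove_removeAt_apply _ _ y).symm) ?_ ?_
  · rw [Fin.succAbove_succ_of_le _ _ hx.le, Fin.val_castSucc, Fin.val_succ]
    exact fun h => hx.ne (Fin.ext (by omega))
  · rw [Fin.succAbove_succ_of_le _ _ hx.le, ← hσm]
    intro h
    exact hx.ne (Fin.castSucc_injective _ (σ.injective (Fin.ext (by omega))))

theorem castSucc_mem_Suc_insertAt (τ : Perm (Fin n)) (m : Fin n) :
    m.castSucc ∈ Suc (insertAt m.succ (τ m).succ τ) := by
  rw [castSucc_mem_Suc_iff, ← Fin.succAbove_succ_self, insertAt_apply_succAbove,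
    insertAt_apply_self, Fin.succAbove_succ_self, Fin.val_castSucc, Fin.val_succ]

theorem insertAt_removeAt_of_castSucc_mem_Suc {σ : Perm (Fin (n + 1))} {m : Fin n}
    (hm : m.castSucc ∈ Suc σ) :
    insertAt m.succ (removeAt m.succ σ m).succ (removeAt m.succ σ) = σ := by
  have hσm := castSucc_mem_Suc_iff.1 hm
  have hτm := succAbove_removeAt_apply m.succ σ m
  rw [Fin.succAbove_succ_self] at hτm
  have hsucc : (removeAt m.succ σ m).succ = σ m.succ := by
    apply Fin.ext
    rw [← hτm, Fin.val_succAbove] at hσm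
    rw [Fin.val_succ]
    split_ifs at hσm <;> omega
  rw [hsucc, insertAt_removeAt]

theorem card_subset_Suc_eq_erase_max {J : Finset (Fin (n + 1))} {m : Fin n}
    (hm : m.castSucc ∈ J) (hmax : ∀ i ∈ J, i ≤ m.castSucc) :
    #{σ : Perm (Fin (n + 1)) | J ⊆ Suc σ} =
      #{τ : Perm (Fin n) |
        (J.erase m.castSucc).preimage Fin.castSucc (Fin.castSucc_injective _).injOn ⊆ Suc τ} := by
  refine card_bij' (fun σ _ => removeAt m.succ σ) (fun τ _ => insertAt m.succ (τ m).succ τ)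
    ?_ ?_ (fun σ hσ => insertAt_removeAt_of_castSucc_mem_Suc ((mem_filter.1 hσ).2 hm))
    (fun τ _ => removeAt_insertAt _ _ τ)
  · simp only [mem_filter, mem_univ, true_and]
    intro σ hJ x hx
    rw [mem_preimage] at hx
    have hxm : x < m := Fin.castSucc_lt_castSucc_iff.1 <|
      lt_of_le_of_ne (hmax _ (mem_of_mem_erase hx)) (ne_of_mem_erase hx)
    exact (castSucc_mem_Suc_iff_mem_Suc_removeAt (castSucc_mem_Suc_iff.1 (hJ hm)) hxm).1
      (hJ (mem_of_mem_erase hx))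
  · simp only [mem_filter, mem_univ, true_and]
    intro τ hJ' i hi
    rcases eq_or_ne i m.castSucc with rfl | him
    · exact castSucc_mem_Suc_insertAt τ m
    have him' := lt_of_le_of_ne (hmax i hi) him
    obtain ⟨x, rfl⟩ := Fin.exists_castSucc_eq.2 (him'.trans (Fin.castSucc_lt_last m)).ne
    rw [castSucc_mem_Suc_iff_mem_Suc_removeAt
      (castSucc_mem_Suc_iff.1 (castSucc_mem_Suc_insertAt τ m))
      (Fin.castSucc_lt_castSucc_iff.1 him'), removeAt_insertAt]
    exact hJ' (mem_preimage.2 (mem_erase.2 ⟨him, hi⟩))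

theorem card_subset_Suc {J : Finset (Fin n)} (hJ : ∀ i ∈ J, (i : ℕ) + 1 < n) :
    #{σ : Perm (Fin n) | J ⊆ Suc σ} = (n - #J)! := by
  induction n with
  | zero => simp [Subsingleton.elim J ∅]
  | succ n ih =>
    obtain rfl | hne := J.eq_empty_or_nonempty
    · simp [Fintype.card_perm]
    obtain ⟨m, hm⟩ := Fin.exists_castSucc_eq.2 fun h : J.max' hne = Fin.last n => by
      have := hJ _ (J.max'_mem hne)
      rw [h, Fin.val_last] at this
      omega
    have hmJ : m.castSucc ∈ J := hm ▸ J.max'_mem hne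
    have hmax : ∀ i ∈ J, i ≤ m.castSucc := hm ▸ J.le_max'
    have below : ∀ i ∈ J.erase m.castSucc, i < m.castSucc := fun i hi =>
      lt_of_le_of_ne (hmax i (mem_of_mem_erase hi)) (ne_of_mem_erase hi)
    rw [card_subset_Suc_eq_erase_max hmJ hmax, ih, card_preimage,
      filter_true_of_mem fun i hi =>
        Fin.range_castSucc ▸ (below i hi).trans (Fin.castSucc_lt_last m),
      card_erase_of_mem hmJ]
    · have := card_pos.2 hne
      congr 1
      omega
    · intro x hx
      have := below _ (mem_preimage.1 hx)
      rw [Fin.castSucc_lt_castSucc_iff, Fin.lt_def] at this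
      omega

end Successions

section FixedPoints

variable {n : ℕ}

theorem card_subset_Fixbar {J : Finset (Fin n)} (hJ : ∀ i ∈ J, (i : ℕ) + 1 < n) :
    #{σ : Perm (Fin n) | J ⊆ Fixbar σ} = (n - #J)! := by
  have hfixed := Perm.card_forall_mem_fixed J
  rw [Fintype.card_fin, Fintype.card_subtype] at hfixed
  rw [← hfixed]
  refine congrArg card (filter_congr fun σ _ => ?_)
  simp only [Fixbar, subset_iff, mem_filter, mem_univ, true_and]
  exact forall₂_congr fun i hi => and_iff_right (hJ i hi)

theorem card_subset_Suc_eq_card_subset_Fixbar (J : Finset (Fin n)) :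
    #{σ : Perm (Fin n) | J ⊆ Suc σ} = #{σ : Perm (Fin n) | J ⊆ Fixbar σ} := by
  by_cases hJ : ∀ i ∈ J, (i : ℕ) + 1 < n
  · rw [card_subset_Suc hJ, card_subset_Fixbar hJ]
  push Not at hJ
  obtain ⟨i, hi, hin⟩ := hJ
  have notSuc : ∀ σ : Perm (Fin n), ¬J ⊆ Suc σ := fun σ h => by
    obtain ⟨j, hj, -⟩ := mem_Suc.1 (h hi)
    omega
  have notFixbar : ∀ σ : Perm (Fin n), ¬J ⊆ Fixbar σ := fun σ h =>
    hin.not_gt (mem_filter.1 (h hi)).2.1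
  rw [filter_false_of_mem fun σ _ => notSuc σ, filter_false_of_mem fun σ _ => notFixbar σ]

end FixedPoints

theorem stmt_0_general (n : ℕ) (I : Finset (Fin n)) :
    ((Finset.univ : Finset (Equiv.Perm (Fin n))).filter (fun σ => Suc σ = I)).card =
    ((Finset.univ : Finset (Equiv.Perm (Fin n))).filter (fun σ => Fixbar σ = I)).card :=
  card_filter_eq_of_card_filter_subset_eq Suc Fixbar card_subset_Suc_eq_card_subset_Fixbar I

/-- Diaconis-Evans-Graham: for any set I of positions (other than the last one),
the number of permutations with succession set I equals the number of permutations
whose set of fixed points distinct from the last position is I. -/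
theorem stmt_0 (n : ℕ) (hn : 1 ≤ n) (I : Finset (Fin n)) (hI : ∀ i ∈ I, (i : ℕ) + 1 < n) :
    ((Finset.univ : Finset (Equiv.Perm (Fin n))).filter (fun σ => Suc σ = I)).card =
    ((Finset.univ : Finset (Equiv.Perm (Fin n))).filter (fun σ => Fixbar σ = I)).card :=
  stmt_0_general n I
end

section
/- For every n ≥ 1 there exists a bijection φ : S_n → S_n such that for all σ ∈ S_n, with τ = φ(σ): (1) {i ∈ [n-1] : σ(i) = i} = {i ∈ [n-1] : τ(i)+1 = τ(i+1)}; (2) {σ(i) : i ∈ [n-1], σ(i) < i} = {i ∈ [n-2] : ∃ j with i+2 ≤ j ≤ n and τ(j) = τ(i)+1}; (3) {σ(i) : i ∈ [n-1], σ(i) > i} = {i : 2 ≤ i ≤ n, ∃ j < i with τ(j) = τ(i)+1}. -/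
open Finset

namespace DEG
variable {n : ℕ}

def Cyc (π : Equiv.Perm (Fin n)) (x : Fin n) : Finset (Fin n) :=
  (Finset.range n).image fun k => (π ^ k) x

lemma mem_Cyc_self (π : Equiv.Perm (Fin n)) (x : Fin n) : x ∈ Cyc π x :=
  Finset.mem_image.2 ⟨0, Finset.mem_range.2 x.pos, rfl⟩

lemma pow_fix (π : Equiv.Perm (Fin n)) (x : Fin n) (d : ℕ) (h : (π ^ d) x = x) :
    ∀ q, (π ^ (d * q)) x = x := by
  intro q
  induction q with
  | zero => simp
  | succ q ih =>
    have : d * (q + 1) = d * q + d := by ring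
    rw [this, pow_add]
    simp only [Equiv.Perm.mul_apply, h, ih]

lemma exists_period (π : Equiv.Perm (Fin n)) (x : Fin n) :
    ∃ d, 0 < d ∧ d ≤ n ∧ (π ^ d) x = x := by
  have hcard : Fintype.card (Fin n) < Fintype.card (Fin (n + 1)) := by simp
  obtain ⟨i, j, hne, heq⟩ :=
    Fintype.exists_ne_map_eq_of_card_lt (fun k : Fin (n + 1) => (π ^ (k : ℕ)) x) hcard
  rcases Ne.lt_or_gt hne with h | h
  · refine ⟨(j : ℕ) - i, by omega, by omega, ?_⟩
    have : (π ^ ((i : ℕ) + ((j : ℕ) - (i : ℕ)))) x = (π ^ (i : ℕ)) x := by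
      rw [show (i : ℕ) + ((j : ℕ) - i) = (j : ℕ) by omega]; exact heq.symm
    rw [pow_add] at this
    exact (π ^ (i : ℕ)).injective this
  · refine ⟨(i : ℕ) - j, by omega, by omega, ?_⟩
    have : (π ^ ((j : ℕ) + ((i : ℕ) - (j : ℕ)))) x = (π ^ (j : ℕ)) x := by
      rw [show (j : ℕ) + ((i : ℕ) - j) = (i : ℕ) by omega]; exact heq
    rw [pow_add] at this
    exact (π ^ (j : ℕ)).injective this

lemma pow_mem_Cyc (π : Equiv.Perm (Fin n)) (x : Fin n) (j : ℕ) : (π ^ j) x ∈ Cyc π x := by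
  obtain ⟨d, hd0, hdn, hd⟩ := exists_period π x
  refine Finset.mem_image.2 ⟨j % d, Finset.mem_range.2 (lt_of_lt_of_le (Nat.mod_lt _ hd0) hdn), ?_⟩
  conv_rhs => rw [show j = j % d + d * (j / d) from (Nat.mod_add_div j d).symm, pow_add]
  simp only [Equiv.Perm.mul_apply, pow_fix π x d hd]

lemma Cyc_subset (π : Equiv.Perm (Fin n)) {x y : Fin n} (h : y ∈ Cyc π x) :
    Cyc π y ⊆ Cyc π x := by
  obtain ⟨k, -, rfl⟩ := Finset.mem_image.1 h
  intro z hz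
  obtain ⟨j, -, rfl⟩ := Finset.mem_image.1 hz
  have : ((π ^ j) ((π ^ k) x)) = (π ^ (j + k)) x := by rw [pow_add]; rfl
  rw [this]; exact pow_mem_Cyc π x _

lemma mem_Cyc_symm (π : Equiv.Perm (Fin n)) {x y : Fin n} (h : y ∈ Cyc π x) :
    x ∈ Cyc π y := by
  obtain ⟨k, -, rfl⟩ := Finset.mem_image.1 h
  obtain ⟨d, hd0, hdn, hd⟩ := exists_period π x
  obtain ⟨d', rfl⟩ : ∃ d', d = d' + 1 := ⟨d - 1, by omega⟩
  have h1 : (π ^ (k * d' + k)) x = x := by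
    rw [show k * d' + k = (d' + 1) * k by ring]
    exact pow_fix π x (d' + 1) hd k
  have h2 : (π ^ (k * d')) ((π ^ k) x) = x := by
    rw [← Equiv.Perm.mul_apply, ← pow_add]; exact h1
  have hm := pow_mem_Cyc π ((π ^ k) x) (k * d')
  rwa [h2] at hm

lemma Cyc_eq_of_mem (π : Equiv.Perm (Fin n)) {x y : Fin n} (h : y ∈ Cyc π x) :
    Cyc π y = Cyc π x :=
  le_antisymm (Cyc_subset π h) (Cyc_subset π (mem_Cyc_symm π h))

def mC (π : Equiv.Perm (Fin n)) (x : Fin n) : Fin n :=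
  (Cyc π x).min' ⟨x, mem_Cyc_self π x⟩

lemma mC_mem (π : Equiv.Perm (Fin n)) (x : Fin n) : mC π x ∈ Cyc π x :=
  Finset.min'_mem _ _

lemma mC_le (π : Equiv.Perm (Fin n)) {x y : Fin n} (h : y ∈ Cyc π x) : mC π x ≤ y :=
  Finset.min'_le _ _ h

lemma mC_le_self (π : Equiv.Perm (Fin n)) (x : Fin n) : mC π x ≤ x :=
  mC_le π (mem_Cyc_self π x)

lemma mC_eq_of_mem (π : Equiv.Perm (Fin n)) {x y : Fin n} (h : y ∈ Cyc π x) :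
    mC π y = mC π x := by
  unfold mC
  congr 1
  exact Cyc_eq_of_mem π h

lemma mC_mC (π : Equiv.Perm (Fin n)) (x : Fin n) : mC π (mC π x) = mC π x :=
  mC_eq_of_mem π (mC_mem π x)

lemma apply_mem_Cyc (π : Equiv.Perm (Fin n)) (x : Fin n) : π x ∈ Cyc π x := by
  have := pow_mem_Cyc π x 1
  rwa [pow_one] at this

lemma mC_apply (π : Equiv.Perm (Fin n)) (x : Fin n) : mC π (π x) = mC π x :=
  mC_eq_of_mem π (apply_mem_Cyc π x)

lemma mem_Cyc_of_mC_eq (π : Equiv.Perm (Fin n)) {x y : Fin n} (h : mC π y = mC π x) :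
    y ∈ Cyc π x := by
  have h1 : Cyc π y = Cyc π (mC π y) := (Cyc_eq_of_mem π (mC_mem π y)).symm
  have h2 : Cyc π (mC π x) = Cyc π x := Cyc_eq_of_mem π (mC_mem π x)
  have : Cyc π y = Cyc π x := by rw [h1, h, h2]
  rw [← this]; exact mem_Cyc_self π y

lemma exists_pow_mC (π : Equiv.Perm (Fin n)) (x : Fin n) :
    ∃ k, k < n ∧ (π ^ k) (mC π x) = x := by
  have : x ∈ Cyc π (mC π x) := by
    rw [Cyc_eq_of_mem π (mC_mem π x)]; exact mem_Cyc_self π x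
  obtain ⟨k, hk, he⟩ := Finset.mem_image.1 this
  exact ⟨k, Finset.mem_range.1 hk, he⟩

lemma exists_pow_mC' (π : Equiv.Perm (Fin n)) (x : Fin n) :
    ∃ k, (π ^ k) (mC π x) = x := by
  obtain ⟨k, -, hk⟩ := exists_pow_mC π x; exact ⟨k, hk⟩

def ordC (π : Equiv.Perm (Fin n)) (x : Fin n) : ℕ :=
  Nat.find (exists_pow_mC' π x)

lemma ordC_spec (π : Equiv.Perm (Fin n)) (x : Fin n) : (π ^ ordC π x) (mC π x) = x :=
  Nat.find_spec (exists_pow_mC' π x)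

lemma ordC_lt (π : Equiv.Perm (Fin n)) (x : Fin n) : ordC π x < n := by
  obtain ⟨k, hk, he⟩ := exists_pow_mC π x
  exact lt_of_le_of_lt (Nat.find_min' _ he) hk

lemma ordC_le (π : Equiv.Perm (Fin n)) {x : Fin n} {k : ℕ} (h : (π ^ k) (mC π x) = x) :
    ordC π x ≤ k := Nat.find_min' _ h

lemma ordC_mC (π : Equiv.Perm (Fin n)) (x : Fin n) : ordC π (mC π x) = 0 := by
  have : (π ^ 0) (mC π (mC π x)) = mC π x := by rw [mC_mC]; rfl
  exact Nat.le_zero.1 (ordC_le π this)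

lemma ordC_eq_zero_iff (π : Equiv.Perm (Fin n)) (x : Fin n) :
    ordC π x = 0 ↔ mC π x = x := by
  constructor
  · intro h
    have := ordC_spec π x
    rwa [h, pow_zero] at this
  · intro h
    have : (π ^ 0) (mC π x) = x := by rw [pow_zero]; exact h
    exact Nat.le_zero.1 (ordC_le π this)

lemma ordC_apply (π : Equiv.Perm (Fin n)) {x : Fin n} (h : π x ≠ mC π x) :
    ordC π (π x) = ordC π x + 1 := by
  have hm : mC π (π x) = mC π x := mC_apply π x
  have hle : ordC π (π x) ≤ ordC π x + 1 := by
    apply ordC_le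
    rw [hm, pow_succ']
    simp only [Equiv.Perm.mul_apply, ordC_spec]
  have hge : ordC π x + 1 ≤ ordC π (π x) := by
    rcases Nat.eq_zero_or_pos (ordC π (π x)) with h0 | hpos
    · exact absurd ((ordC_eq_zero_iff π (π x)).1 h0) (by rw [hm]; exact fun e => h e.symm)
    · obtain ⟨k, hk⟩ : ∃ k, ordC π (π x) = k + 1 := ⟨ordC π (π x) - 1, by omega⟩
      have hs := ordC_spec π (π x)
      rw [hk, hm, pow_succ'] at hs
      simp only [Equiv.Perm.mul_apply] at hs
      have := π.injective hs
      have := ordC_le π this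
      omega
  omega

lemma ordC_le_of_last (π : Equiv.Perm (Fin n)) {x y : Fin n} (hlast : π x = mC π x)
    (hy : y ∈ Cyc π x) : ordC π y ≤ ordC π x ∧ (ordC π y = ordC π x → y = x) := by
  have hd : (π ^ (ordC π x + 1)) (mC π x) = mC π x := by
    rw [pow_succ']
    simp only [Equiv.Perm.mul_apply, ordC_spec]
    exact hlast
  have hmy : mC π y = mC π x := mC_eq_of_mem π hy
  have hy' : y ∈ Cyc π (mC π x) := by
    rw [Cyc_eq_of_mem π (mC_mem π x)]; exact hy
  obtain ⟨k, -, hk⟩ := Finset.mem_image.1 hy'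
  have hk' : (π ^ (k % (ordC π x + 1))) (mC π x) = y := by
    conv_lhs at hk => rw [show k = k % (ordC π x + 1) + (ordC π x + 1) * (k / (ordC π x + 1))
      from (Nat.mod_add_div _ _).symm, pow_add]
    rw [← hk]
    simp only [Equiv.Perm.mul_apply, pow_fix π (mC π x) _ hd]
  have h1 : ordC π y ≤ k % (ordC π x + 1) := ordC_le π (by rw [hmy]; exact hk')
  have h2 : k % (ordC π x + 1) < ordC π x + 1 := Nat.mod_lt _ (by omega)
  constructor
  · omega
  · intro he
    have : (π ^ ordC π y) (mC π y) = y := ordC_spec π y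
    rw [he, hmy] at this
    rw [← this, ordC_spec]

lemma pi_fix_mC (π : Equiv.Perm (Fin n)) {x : Fin n} (h : π x = x) : mC π x = x := by
  have hall : ∀ k, (π ^ k) x = x := by
    intro k
    induction k with
    | zero => rfl
    | succ k ih => rw [pow_succ]; simp only [Equiv.Perm.mul_apply, ih, h]
  have := mC_mem π x
  obtain ⟨k, -, hk⟩ := Finset.mem_image.1 this
  rw [← hk, hall]

def key (π : Equiv.Perm (Fin n)) (x : Fin n) : ℕ :=
  (n - 1 - (mC π x : ℕ)) * n + ordC π x

lemma key_lt_of_mC_lt (π : Equiv.Perm (Fin n)) {x y : Fin n}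
    (h : (mC π y : ℕ) < (mC π x : ℕ)) : key π x < key π y := by
  unfold key
  have h1 : (mC π x : ℕ) < n := (mC π x).isLt
  have h2 : ordC π x < n := ordC_lt π x
  have h3 : n - 1 - (mC π x : ℕ) + 1 ≤ n - 1 - (mC π y : ℕ) := by omega
  calc (n - 1 - (mC π x : ℕ)) * n + ordC π x < (n - 1 - (mC π x : ℕ) + 1) * n := by
        rw [add_mul, one_mul]; omega
    _ ≤ (n - 1 - (mC π y : ℕ)) * n := Nat.mul_le_mul_right n h3
    _ ≤ _ := Nat.le_add_right _ _

lemma key_inj (π : Equiv.Perm (Fin n)) : Function.Injective (key π) := by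
  intro x y h
  unfold key at h
  have h1 : (mC π x : ℕ) < n := (mC π x).isLt
  have h1' : (mC π y : ℕ) < n := (mC π y).isLt
  have h2 : ordC π x < n := ordC_lt π x
  have h2' : ordC π y < n := ordC_lt π y
  have hm : mC π x = mC π y := by
    by_contra hne
    rcases Ne.lt_or_gt (fun e : (mC π x : ℕ) = (mC π y : ℕ) => hne (Fin.ext e)) with hl | hl
    · have := key_lt_of_mC_lt π hl
      unfold key at this; omega
    · have := key_lt_of_mC_lt π hl
      unfold key at this; omega
  have ho : ordC π x = ordC π y := by
    rw [show (mC π x : ℕ) = (mC π y : ℕ) from congrArg Fin.val hm] at h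
    omega
  have hx := ordC_spec π x
  have hy := ordC_spec π y
  rw [← hx, ← hy, hm, ho]

lemma key_lt_of_same (π : Equiv.Perm (Fin n)) {x y : Fin n}
    (hm : mC π x = mC π y) (ho : ordC π x < ordC π y) : key π x < key π y := by
  unfold key
  rw [show (mC π x : ℕ) = (mC π y : ℕ) from congrArg Fin.val hm]
  omega

lemma mC_lt_of_key_lt (π : Equiv.Perm (Fin n)) {x y : Fin n} (h : key π x < key π y) :
    (mC π y : ℕ) < (mC π x : ℕ) ∨ (mC π x = mC π y ∧ ordC π x < ordC π y) := by
  rcases lt_trichotomy (mC π y : ℕ) (mC π x : ℕ) with hl | he | hl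
  · exact Or.inl hl
  · right
    have hm : mC π x = mC π y := Fin.ext he.symm
    unfold key at h
    rw [show (mC π x : ℕ) = (mC π y : ℕ) from congrArg Fin.val hm] at h
    exact ⟨hm, by omega⟩
  · exact absurd h (not_lt.2 (le_of_lt (key_lt_of_mC_lt π hl)))

def rk (π : Equiv.Perm (Fin n)) (x : Fin n) : ℕ :=
  (univ.filter fun y => key π y < key π x).card

lemma rk_lt (π : Equiv.Perm (Fin n)) (x : Fin n) : rk π x < n := by
  have hsub : (univ.filter fun y => key π y < key π x) ⊆ univ.erase x := by
    intro y hy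
    rw [Finset.mem_filter] at hy
    exact Finset.mem_erase.2 ⟨fun e => absurd (congrArg (key π) e) (Nat.ne_of_lt hy.2), Finset.mem_univ _⟩
  calc rk π x ≤ (univ.erase x).card := Finset.card_le_card hsub
    _ = n - 1 := by rw [Finset.card_erase_of_mem (Finset.mem_univ x)]; simp
    _ < n := by have := x.pos; omega

lemma rk_lt_rk (π : Equiv.Perm (Fin n)) {x y : Fin n} (h : key π x < key π y) :
    rk π x < rk π y := by
  apply Finset.card_lt_card
  rw [Finset.ssubset_iff_of_subset]
  · exact ⟨x, Finset.mem_filter.2 ⟨Finset.mem_univ _, h⟩, fun hx =>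
      lt_irrefl _ (Finset.mem_filter.1 hx).2⟩
  · intro z hz
    rw [Finset.mem_filter] at hz ⊢
    exact ⟨hz.1, hz.2.trans h⟩

lemma key_lt_of_rk_lt (π : Equiv.Perm (Fin n)) {x y : Fin n} (h : rk π x < rk π y) :
    key π x < key π y := by
  rcases lt_trichotomy (key π x) (key π y) with hl | he | hl
  · exact hl
  · exact absurd (congrArg (rk π) (key_inj π he)) (by omega)
  · exact absurd (rk_lt_rk π hl) (by omega)

noncomputable def tauP (π : Equiv.Perm (Fin n)) : Equiv.Perm (Fin n) :=
  Equiv.ofBijective (fun x => (⟨rk π x, rk_lt π x⟩ : Fin n))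
    (Finite.injective_iff_bijective.1 (by
      intro x y h
      have : rk π x = rk π y := congrArg Fin.val h
      rcases lt_trichotomy (key π x) (key π y) with hl | he | hl
      · exact absurd (rk_lt_rk π hl) (by omega)
      · exact key_inj π he
      · exact absurd (rk_lt_rk π hl) (by omega)))

lemma tauP_apply (π : Equiv.Perm (Fin n)) (x : Fin n) : (tauP π x : ℕ) = rk π x := rfl

lemma succ_iff (π : Equiv.Perm (Fin n)) (x y : Fin n) :
    (tauP π x : ℕ) + 1 = (tauP π y : ℕ) ↔
      key π x < key π y ∧ ∀ z, ¬(key π x < key π z ∧ key π z < key π y) := by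
  simp only [tauP_apply]
  constructor
  · intro h
    have hxy : key π x < key π y := key_lt_of_rk_lt π (by omega)
    refine ⟨hxy, fun z ⟨h1, h2⟩ => ?_⟩
    have r1 := rk_lt_rk π h1
    have r2 := rk_lt_rk π h2
    omega
  · rintro ⟨hxy, hno⟩
    have : (univ.filter fun z => key π z < key π y) =
        insert x (univ.filter fun z => key π z < key π x) := by
      ext z
      simp only [Finset.mem_filter, Finset.mem_insert, Finset.mem_univ, true_and]
      constructor
      · intro hz
        rcases lt_trichotomy (key π z) (key π x) with hl | he | hl
        · exact Or.inr hl
        · exact Or.inl (key_inj π he)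
        · exact absurd ⟨hl, hz⟩ (hno z)
      · rintro (rfl | hz)
        · exact hxy
        · exact hz.trans hxy
    unfold rk
    rw [this, Finset.card_insert_of_notMem (by
      simp only [Finset.mem_filter]; exact fun h => lt_irrefl _ h.2)]

lemma succ_unique (π : Equiv.Perm (Fin n)) {x y j : Fin n}
    (h : (tauP π x : ℕ) + 1 = (tauP π y : ℕ)) (hj : (tauP π j : ℕ) = (tauP π x : ℕ) + 1) :
    j = y := by
  apply (tauP π).injective
  apply Fin.ext
  rw [hj, h]

lemma succ_of_not_last (π : Equiv.Perm (Fin n)) {x : Fin n} (h : π x ≠ mC π x) :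
    (tauP π x : ℕ) + 1 = (tauP π (π x) : ℕ) := by
  rw [succ_iff]
  have hkey : key π (π x) = key π x + 1 := by
    unfold key
    rw [mC_apply, ordC_apply π h]
    ring
  exact ⟨by omega, fun z ⟨h1, h2⟩ => by omega⟩

lemma mC_zero (π : Equiv.Perm (Fin n)) (h : 0 < n) : mC π ⟨0, h⟩ = ⟨0, h⟩ := by
  apply Fin.ext
  have h1 : (mC π ⟨0, h⟩ : ℕ) ≤ 0 := (Fin.le_def).1 (mC_le_self π ⟨0, h⟩)
  exact Nat.le_zero.1 h1

/-- if `x` is the last element of its cycle and is not key-maximal, there is a key-successor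
`z` which is the minimum of its own cycle and is smaller than `mC π x`. -/
lemma succ_of_last (π : Equiv.Perm (Fin n)) {x : Fin n} (hlast : π x = mC π x)
    (hbig : ∃ y, key π x < key π y) :
    ∃ z, (tauP π x : ℕ) + 1 = (tauP π z : ℕ) ∧ mC π z = z ∧ (z : ℕ) < (mC π x : ℕ) := by
  have hpos : 0 < n := x.pos
  have hne0 : mC π x ≠ ⟨0, hpos⟩ := by
    rintro h0
    obtain ⟨y, hy⟩ := hbig
    rcases mC_lt_of_key_lt π hy with hl | ⟨hm, ho⟩
    · rw [h0] at hl; exact absurd hl (by simp)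
    · have := (ordC_le_of_last π hlast (mem_Cyc_of_mC_eq π hm.symm)).1
      omega
  set M : Finset (Fin n) := univ.filter fun y => mC π y = y ∧ (y : ℕ) < (mC π x : ℕ) with hM
  have hMne : M.Nonempty := by
    refine ⟨⟨0, hpos⟩, Finset.mem_filter.2 ⟨Finset.mem_univ _, mC_zero π hpos, ?_⟩⟩
    exact Nat.pos_of_ne_zero (fun e => hne0 (Fin.ext e))
  set z := M.max' hMne with hz
  have hzM := M.max'_mem hMne
  rw [Finset.mem_filter] at hzM
  obtain ⟨-, hzm, hzlt⟩ := hzM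
  refine ⟨z, ?_, hzm, hzlt⟩
  rw [succ_iff]
  constructor
  · apply key_lt_of_mC_lt
    rw [hzm]; exact hzlt
  · rintro w ⟨h1, h2⟩
    -- key x < key w implies mC w < mC x
    have hmw : (mC π w : ℕ) < (mC π x : ℕ) := by
      rcases mC_lt_of_key_lt π h1 with hl | ⟨hm, ho⟩
      · exact hl
      · have := (ordC_le_of_last π hlast (mem_Cyc_of_mC_eq π hm.symm)).1
        omega
    have hmwM : mC π w ∈ M := Finset.mem_filter.2 ⟨Finset.mem_univ _, mC_mC π w, hmw⟩
    have hle : mC π w ≤ z := Finset.le_max' M _ hmwM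
    rcases eq_or_lt_of_le hle with heq | hlt
    · -- key z ≤ key w, contradiction with h2
      have : key π z ≤ key π w := by
        have ho : ordC π z = 0 := (ordC_eq_zero_iff π z).2 hzm
        unfold key
        rw [show (mC π z : ℕ) = (mC π w : ℕ) from congrArg Fin.val (hzm.trans heq.symm), ho]
        omega
      omega
    · have : key π z < key π w := key_lt_of_mC_lt π (by
        rw [hzm]
        exact (Fin.lt_def).1 hlt)
      omega

lemma key_max_rk (π : Equiv.Perm (Fin n)) {x : Fin n} (h : ∀ y, key π y ≤ key π x) :
    (tauP π x : ℕ) = n - 1 := by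
  rw [tauP_apply]
  unfold rk
  have : (univ.filter fun y => key π y < key π x) = univ.erase x := by
    ext y
    simp only [Finset.mem_filter, Finset.mem_erase, Finset.mem_univ, true_and, and_true]
    constructor
    · exact fun hy e => absurd (congrArg (key π) e) (Nat.ne_of_lt hy)
    · exact fun hy => lt_of_le_of_ne (h y) (fun e => hy (key_inj π e))
  rw [this, Finset.card_erase_of_mem (Finset.mem_univ x)]
  simp

def LR (t : Equiv.Perm (Fin n)) (u : Fin n) : Prop :=
  ∀ u' : Fin n, u' < u → t.symm u < t.symm u'

instance (t : Equiv.Perm (Fin n)) : DecidablePred (LR t) := fun _ => by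
  unfold LR; infer_instance

lemma filter_LR_nonempty [NeZero n] (t : Equiv.Perm (Fin n)) (v : Fin n) :
    (univ.filter fun u => u ≤ v ∧ LR t u).Nonempty := by
  refine ⟨0, Finset.mem_filter.2 ⟨Finset.mem_univ _, Fin.zero_le v, ?_⟩⟩
  intro u' hu'
  exact absurd ((Fin.lt_def).1 hu') (by simp)

noncomputable def lastLR [NeZero n] (t : Equiv.Perm (Fin n)) (v : Fin n) : Fin n :=
  (univ.filter fun u => u ≤ v ∧ LR t u).max' (filter_LR_nonempty t v)

noncomputable def recon [NeZero n] (t : Equiv.Perm (Fin n)) (x : Fin n) : Fin n :=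
  if LR t (t x + 1) then t.symm (lastLR t (t x)) else t.symm (t x + 1)

lemma LR_iff (π : Equiv.Perm (Fin n)) (u : Fin n) :
    LR (tauP π) u ↔ mC π ((tauP π).symm u) = (tauP π).symm u := by
  set t := tauP π with ht
  have hval : ∀ y : Fin n, (t y : ℕ) = rk π y := fun y => tauP_apply π y
  constructor
  · intro hLR
    by_contra hne
    set y := t.symm u with hy
    have hor : ordC π y ≠ 0 := fun e => hne ((ordC_eq_zero_iff π y).1 e)
    have hkey : key π (mC π y) < key π y := by
      apply key_lt_of_same
      · exact (mC_mC π y).symm ▸ rfl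
      · rw [ordC_mC]; omega
    have hrk : rk π (mC π y) < rk π y := rk_lt_rk π hkey
    have hu' : t (mC π y) < u := by
      rw [show u = t y from (t.apply_symm_apply u).symm]
      rw [Fin.lt_def, hval, hval]
      exact hrk
    have := hLR _ hu'
    rw [t.symm_apply_apply] at this
    rw [← hy] at this
    exact absurd ((mC_le_self π y).trans_lt this) (lt_irrefl _)
  · intro hm u' hu'
    set y := t.symm u with hy
    set y' := t.symm u' with hy'
    have hrk : rk π y' < rk π y := by
      have h1 : (t y' : ℕ) < (t y : ℕ) := by
        rw [t.apply_symm_apply, t.apply_symm_apply]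
        exact (Fin.lt_def).1 hu'
      rwa [hval, hval] at h1
    have hkey : key π y' < key π y := key_lt_of_rk_lt π hrk
    rcases mC_lt_of_key_lt π hkey with hl | ⟨hmm, ho⟩
    · -- mC y < mC y' : then y < y'? we want y < y' i.e. t.symm u < t.symm u'
      have h1 : (mC π y : ℕ) < (mC π y' : ℕ) := hl
      have h2 : (mC π y' : ℕ) ≤ (y' : ℕ) := (Fin.le_def).1 (mC_le_self π y')
      have h3 : (y : ℕ) = (mC π y : ℕ) := (congrArg Fin.val hm).symm
      rw [Fin.lt_def]
      omega
    · exfalso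
      have h0 : ordC π y = 0 := (ordC_eq_zero_iff π y).2 hm
      omega

lemma lastLR_eq [NeZero n] (π : Equiv.Perm (Fin n)) (x : Fin n) :
    lastLR (tauP π) (tauP π x) = tauP π (mC π x) := by
  set t := tauP π with ht
  unfold lastLR
  apply le_antisymm
  · apply Finset.max'_le
    intro u hu
    rw [Finset.mem_filter] at hu
    obtain ⟨-, hule, huLR⟩ := hu
    set y := t.symm u with hy
    have hym : mC π y = y := (LR_iff π u).1 huLR
    -- key y ≤ key (mC π x)
    have hkyx : key π y ≤ key π x := by
      rcases eq_or_lt_of_le hule with he | hl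
      · have : y = x := by rw [hy, he, t.symm_apply_apply]
        rw [this]
      · have : rk π y < rk π x := by
          have := (Fin.lt_def).1 hl
          rw [show u = t y from (t.apply_symm_apply u).symm] at this
          rwa [tauP_apply, tauP_apply] at this
        exact le_of_lt (key_lt_of_rk_lt π this)
    have hkey : key π y ≤ key π (mC π x) := by
      rcases eq_or_ne (mC π y) (mC π x) with he | hne
      · -- same cycle, y = mC y so y = mC x
        have : y = mC π x := hym.symm.trans he
        rw [this]
      · have hmx : (mC π x : ℕ) < (mC π y : ℕ) := by
          by_contra hle
          have hlt : (mC π y : ℕ) < (mC π x : ℕ) := by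
            rcases lt_trichotomy (mC π y : ℕ) (mC π x : ℕ) with a | a | a
            · exact a
            · exact absurd (Fin.ext a) hne
            · omega
          exact absurd (key_lt_of_mC_lt π hlt) (by omega)
        apply le_of_lt
        apply key_lt_of_mC_lt
        rw [mC_mC]
        exact hmx
    have : rk π y ≤ rk π (mC π x) := by
      rcases eq_or_lt_of_le hkey with he | hl
      · rw [key_inj π he]
      · exact le_of_lt (rk_lt_rk π hl)
    have : (t y : ℕ) ≤ (t (mC π x) : ℕ) := by rwa [tauP_apply, tauP_apply]
    rw [Fin.le_def]
    rw [show u = t y from (t.apply_symm_apply u).symm]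
    exact this
  · apply Finset.le_max'
    rw [Finset.mem_filter]
    refine ⟨Finset.mem_univ _, ?_, ?_⟩
    · rw [Fin.le_def, tauP_apply, tauP_apply]
      rcases eq_or_ne (mC π x) x with he | hne
      · rw [he]
      · apply le_of_lt
        apply rk_lt_rk
        apply key_lt_of_same
        · exact mC_mC π x
        · rw [ordC_mC]
          have : ordC π x ≠ 0 := fun e => hne ((ordC_eq_zero_iff π x).1 e)
          omega
    · rw [LR_iff, Equiv.symm_apply_apply]
      exact mC_mC π x

lemma fin_succ_val {N : ℕ} (a : Fin (N + 1)) (h : (a : ℕ) < N) :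
    ((a + 1 : Fin (N + 1)) : ℕ) = (a : ℕ) + 1 :=
  Fin.val_add_one_of_lt (by rw [Fin.lt_def, Fin.val_last]; exact h)

lemma recon_eq {N : ℕ} (π : Equiv.Perm (Fin (N + 1))) (x : Fin (N + 1)) :
    recon (tauP π) x = π x := by
  set t := tauP π with ht
  have hsucc_fin : ∀ z : Fin (N + 1), (t x : ℕ) + 1 = (t z : ℕ) → t x + 1 = t z := by
    intro z hz
    have h1 : (t z : ℕ) < N + 1 := (t z).isLt
    apply Fin.ext
    rw [fin_succ_val _ (by omega)]
    exact hz
  by_cases hlast : π x = mC π x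
  · -- then branch should fire
    have hthen : LR t (t x + 1) := by
      by_cases hbig : ∃ y, key π x < key π y
      · obtain ⟨z, hz1, hz2, -⟩ := succ_of_last π hlast hbig
        rw [hsucc_fin z hz1, ht, LR_iff, Equiv.symm_apply_apply]
        exact hz2
      · push_neg at hbig
        have hmax : (t x : ℕ) = N := by
          have := key_max_rk π hbig
          simpa using this
        have : t x = Fin.last N := Fin.ext (by rw [Fin.val_last]; exact hmax)
        rw [this, Fin.last_add_one]
        intro u' hu'
        exact absurd hu' (Fin.not_lt_zero u')
    rw [recon, if_pos hthen, ht, lastLR_eq, Equiv.symm_apply_apply, ← hlast]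
  · have hsucc := succ_of_not_last π hlast
    have heq : t x + 1 = t (π x) := hsucc_fin _ hsucc
    have hnot : ¬ LR t (t x + 1) := by
      rw [heq, ht, LR_iff, Equiv.symm_apply_apply, mC_apply]
      exact fun e => hlast e.symm
    rw [recon, if_neg hnot, heq, Equiv.symm_apply_apply]

lemma tauP_injective {N : ℕ} : Function.Injective (tauP : Equiv.Perm (Fin (N + 1)) → _) := by
  intro π₁ π₂ h
  ext x
  have h1 := recon_eq π₁ x
  have h2 := recon_eq π₂ x
  rw [h] at h1
  rw [← h1, ← h2]

variable {N : ℕ}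

def piP (σ : Equiv.Perm (Fin (N + 1))) : Equiv.Perm (Fin (N + 1)) :=
  σ.symm.trans (Equiv.addRight 1)

lemma piP_apply (σ : Equiv.Perm (Fin (N + 1))) (x : Fin (N + 1)) :
    piP σ x = σ.symm x + 1 := rfl

lemma symm_ne_last {σ : Equiv.Perm (Fin (N + 1))} {x : Fin (N + 1)}
    (h : x ≠ σ (Fin.last N)) : (σ.symm x : ℕ) < N := by
  have h1 : σ.symm x ≠ Fin.last N := fun e => h (by rw [← e, σ.apply_symm_apply])
  have h2 : (σ.symm x : ℕ) < N + 1 := (σ.symm x).isLt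
  have h3 : (σ.symm x : ℕ) ≠ N := fun e => h1 (Fin.ext (by rw [Fin.val_last]; exact e))
  omega

lemma piP_val {σ : Equiv.Perm (Fin (N + 1))} {x : Fin (N + 1)}
    (h : x ≠ σ (Fin.last N)) : (piP σ x : ℕ) = (σ.symm x : ℕ) + 1 := by
  rw [piP_apply]
  exact fin_succ_val _ (symm_ne_last h)

lemma piP_x0 (σ : Equiv.Perm (Fin (N + 1))) : piP σ (σ (Fin.last N)) = 0 := by
  rw [piP_apply, Equiv.symm_apply_apply, Fin.last_add_one]

lemma key_max_x0 (σ : Equiv.Perm (Fin (N + 1))) (y : Fin (N + 1)) :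
    key (piP σ) y ≤ key (piP σ) (σ (Fin.last N)) := by
  set π := piP σ with hπ
  set x₀ := σ (Fin.last N) with hx₀
  have h0 : π x₀ = 0 := piP_x0 σ
  have hm0 : mC π x₀ = 0 := by
    apply le_antisymm
    · have : (0 : Fin (N + 1)) ∈ Cyc π x₀ := h0 ▸ apply_mem_Cyc π x₀
      exact mC_le π this
    · exact Fin.zero_le _
  have hlast : π x₀ = mC π x₀ := h0.trans hm0.symm
  by_cases hc : mC π y = mC π x₀
  · have hyc : y ∈ Cyc π x₀ := mem_Cyc_of_mC_eq π hc
    have hord := (ordC_le_of_last π hlast hyc).1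
    unfold key
    rw [show (mC π y : ℕ) = (mC π x₀ : ℕ) from congrArg Fin.val hc]
    omega
  · apply le_of_lt
    apply key_lt_of_mC_lt
    rw [hm0]
    have : mC π y ≠ 0 := fun e => hc (e.trans hm0.symm)
    exact Nat.pos_of_ne_zero (fun e => this (Fin.ext e))

lemma no_succ_x0 (σ : Equiv.Perm (Fin (N + 1))) (j : Fin (N + 1)) :
    (tauP (piP σ) j : ℕ) ≠ (tauP (piP σ) (σ (Fin.last N)) : ℕ) + 1 := by
  intro hj
  have := ((succ_iff (piP σ) (σ (Fin.last N)) j).1 hj.symm).1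
  exact absurd (key_max_x0 σ j) (by omega)

lemma master (σ : Equiv.Perm (Fin (N + 1))) (x : Fin (N + 1)) :
    (((x : ℕ) + 1 < N + 1 ∧ σ x = x) ↔
      (∃ j : Fin (N + 1), (j : ℕ) = (x : ℕ) + 1 ∧
        (tauP (piP σ) x : ℕ) + 1 = (tauP (piP σ) j : ℕ))) ∧
    ((∃ i : Fin (N + 1), (i : ℕ) + 1 < N + 1 ∧ σ i = x ∧ (σ i : ℕ) < (i : ℕ)) ↔
      (∃ j : Fin (N + 1), (x : ℕ) + 2 ≤ (j : ℕ) ∧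
        (tauP (piP σ) j : ℕ) = (tauP (piP σ) x : ℕ) + 1)) ∧
    ((∃ i : Fin (N + 1), (i : ℕ) + 1 < N + 1 ∧ σ i = x ∧ (i : ℕ) < (σ i : ℕ)) ↔
      (∃ j : Fin (N + 1), j < x ∧
        (tauP (piP σ) j : ℕ) = (tauP (piP σ) x : ℕ) + 1)) := by
  set π := piP σ with hπdef
  set t := tauP π with htdef
  set x₀ := σ (Fin.last N) with hx₀
  rcases eq_or_ne x x₀ with rfl | hne
  · -- x = x₀ : everything false
    refine ⟨iff_of_false ?_ ?_, iff_of_false ?_ ?_, iff_of_false ?_ ?_⟩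
    · rintro ⟨h1, h2⟩
      have e1 : x₀ = Fin.last N := σ.injective h2
      rw [e1, Fin.val_last] at h1
      omega
    · rintro ⟨j, -, hj⟩
      exact no_succ_x0 σ j hj.symm
    · rintro ⟨i, h1, h2, -⟩
      have : i = Fin.last N := σ.injective (h2.trans hx₀)
      rw [this, Fin.val_last] at h1
      omega
    · rintro ⟨j, -, hj⟩
      exact no_succ_x0 σ j hj
    · rintro ⟨i, h1, h2, -⟩
      have : i = Fin.last N := σ.injective (h2.trans hx₀)
      rw [this, Fin.val_last] at h1
      omega
    · rintro ⟨j, -, hj⟩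
      exact no_succ_x0 σ j hj
  · have hv : (σ.symm x : ℕ) < N := symm_ne_last hne
    have hπv : (π x : ℕ) = (σ.symm x : ℕ) + 1 := piP_val hne
    have hmlex : (mC π x : ℕ) ≤ (x : ℕ) := (Fin.le_def).1 (mC_le_self π x)
    rcases lt_trichotomy (σ.symm x : ℕ) (x : ℕ) with hE | hF | hD
    · -- Excedance value case
      obtain ⟨z, hz, hzlt⟩ :
          ∃ z : Fin (N + 1), (t x : ℕ) + 1 = (t z : ℕ) ∧ (z : ℕ) < (x : ℕ) := by
        by_cases hml : π x = mC π x
        · have hbig : ∃ y, key π x < key π y := by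
            refine ⟨x₀, lt_of_le_of_ne (key_max_x0 σ x) (fun e => hne (key_inj π e))⟩
          obtain ⟨z, hz1, -, hz3⟩ := succ_of_last π hml hbig
          exact ⟨z, hz1, by omega⟩
        · refine ⟨π x, succ_of_not_last π hml, ?_⟩
          have : (π x : ℕ) ≠ (x : ℕ) := by
            intro e
            have hfix : π x = x := Fin.ext e
            exact hml (hfix.trans (pi_fix_mC π hfix).symm)
          omega
      have hju : ∀ j : Fin (N + 1), (t j : ℕ) = (t x : ℕ) + 1 → j = z := by
        intro j hj
        exact (tauP π).injective (Fin.ext (hj.trans hz))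
      refine ⟨iff_of_false ?_ ?_, iff_of_false ?_ ?_, iff_of_true ?_ ?_⟩
      · rintro ⟨-, h2⟩
        have : σ.symm x = x := by rw [← h2, Equiv.symm_apply_apply]; rw [h2]
        rw [this] at hE; omega
      · rintro ⟨j, hj1, hj2⟩
        rw [hju j hj2.symm] at hj1
        omega
      · rintro ⟨i, -, h2, h3⟩
        have : i = σ.symm x := by rw [← h2, Equiv.symm_apply_apply]
        rw [h2, this] at h3
        omega
      · rintro ⟨j, hj1, hj2⟩
        rw [hju j hj2] at hj1
        omega
      · refine ⟨σ.symm x, by omega, σ.apply_symm_apply x, ?_⟩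
        rw [σ.apply_symm_apply]
        exact hE
      · exact ⟨z, (Fin.lt_def).2 hzlt, hz.symm⟩
    · -- Fixed point case
      have hsx : σ.symm x = x := Fin.ext hF
      have hσx : σ x = x := ((Equiv.symm_apply_eq σ).1 hsx).symm
      have hxN : (x : ℕ) < N := by rw [← hF]; exact hv
      have hml : π x ≠ mC π x := by
        intro e
        have : (π x : ℕ) = (mC π x : ℕ) := congrArg Fin.val e
        rw [hπv, hF] at this
        omega
      have hsucc := succ_of_not_last π hml
      have hju : ∀ j : Fin (N + 1), (t j : ℕ) = (t x : ℕ) + 1 → j = π x := by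
        intro j hj
        exact (tauP π).injective (Fin.ext (hj.trans hsucc))
      refine ⟨iff_of_true ⟨by omega, hσx⟩ ⟨π x, by rw [hπv, hF], hsucc⟩,
        iff_of_false ?_ ?_, iff_of_false ?_ ?_⟩
      · rintro ⟨i, -, h2, h3⟩
        have : i = σ.symm x := by rw [← h2, Equiv.symm_apply_apply]
        rw [h2, this, hsx] at h3
        omega
      · rintro ⟨j, hj1, hj2⟩
        rw [hju j hj2] at hj1
        rw [hπv, hF] at hj1
        omega
      · rintro ⟨i, -, h2, h3⟩
        have : i = σ.symm x := by rw [← h2, Equiv.symm_apply_apply]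
        rw [h2, this, hsx] at h3
        omega
      · rintro ⟨j, hj1, hj2⟩
        rw [hju j hj2] at hj1
        rw [Fin.lt_def, hπv, hF] at hj1
        omega
    · -- Drop value case
      have hml : π x ≠ mC π x := by
        intro e
        have : (π x : ℕ) = (mC π x : ℕ) := congrArg Fin.val e
        omega
      have hsucc := succ_of_not_last π hml
      have hju : ∀ j : Fin (N + 1), (t j : ℕ) = (t x : ℕ) + 1 → j = π x := by
        intro j hj
        exact (tauP π).injective (Fin.ext (hj.trans hsucc))
      refine ⟨iff_of_false ?_ ?_, iff_of_true ?_ ?_, iff_of_false ?_ ?_⟩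
      · rintro ⟨-, h2⟩
        have : σ.symm x = x := by rw [← h2, Equiv.symm_apply_apply]; rw [h2]
        rw [this] at hD; omega
      · rintro ⟨j, hj1, hj2⟩
        rw [hju j hj2.symm] at hj1
        omega
      · refine ⟨σ.symm x, by omega, σ.apply_symm_apply x, ?_⟩
        rw [σ.apply_symm_apply]
        exact hD
      · exact ⟨π x, by omega, hsucc.symm⟩
      · rintro ⟨i, -, h2, h3⟩
        have : i = σ.symm x := by rw [← h2, Equiv.symm_apply_apply]
        rw [h2, this] at h3
        omega
      · rintro ⟨j, hj1, hj2⟩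
        rw [hju j hj2] at hj1
        rw [Fin.lt_def] at hj1
        omega

lemma Phi_injective :
    Function.Injective (fun σ : Equiv.Perm (Fin (N + 1)) => tauP (piP σ)) := by
  intro a b h
  have hp : piP a = piP b := tauP_injective h
  have hs : a.symm = b.symm := by
    apply Equiv.ext
    intro x
    have := Equiv.ext_iff.1 hp x
    rw [piP_apply, piP_apply] at this
    exact add_right_cancel this
  rw [← a.symm_symm, hs, b.symm_symm]

end DEG

/-- Refined Diaconis-Evans-Graham: a bijection φ on S_n sending Fixbar to Suc,
Dropbar to najSuc and Excbar to PredSet. -/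


theorem stmt_1 (n : ℕ) (hn : 1 ≤ n) :
    ∃ φ : Equiv.Perm (Fin n) ≃ Equiv.Perm (Fin n),
      ∀ σ : Equiv.Perm (Fin n),
        Fixbar σ = Suc (φ σ) ∧ Dropbar σ = najSuc (φ σ) ∧ Excbar σ = PredSet (φ σ) := by
  obtain _ | N := n
  · omega
  refine ⟨Equiv.ofBijective (fun σ => DEG.tauP (DEG.piP σ))
    (Finite.injective_iff_bijective.1 DEG.Phi_injective), fun σ => ?_⟩
  have hm := DEG.master σ
  refine ⟨?_, ?_, ?_⟩
  · ext x
    simp only [Fixbar, Suc, mem_filter, mem_univ, true_and, Equiv.ofBijective_apply]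
    exact (hm x).1
  · ext x
    simp only [Dropbar, najSuc, mem_filter, mem_univ, true_and, Equiv.ofBijective_apply]
    exact (hm x).2.1
  · ext x
    simp only [Excbar, PredSet, mem_filter, mem_univ, true_and, Equiv.ofBijective_apply]
    exact (hm x).2.2
end

section
/- The number of permutations σ of [n] with no succession (i.e., no index i ∈ [n-1] with σ(i)+1 = σ(i+1)) equals the number of permutations σ of [n] with no fixed point among positions 1,...,n-1 (i.e., σ(i) ≠ i for all 1 ≤ i ≤ n-1). -/
open Finset

namespace DEGaux

open Equiv

set_option maxHeartbeats 1000000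

lemma succAbove_val {n : ℕ} (q : Fin (n+1)) (y : Fin n) :
    ((q.succAbove y : Fin (n+1)) : ℕ) = if (y : ℕ) < (q : ℕ) then (y : ℕ) else (y : ℕ) + 1 := by
  rw [Fin.succAbove]
  split_ifs with h1 h2 h3 <;> simp_all [Fin.lt_def]

def expandP {n : ℕ} (p q : Fin (n+1)) (σ : Equiv.Perm (Fin n)) : Equiv.Perm (Fin (n+1)) :=
  ((finSuccEquiv' p).trans σ.optionCongr).trans (finSuccEquiv' q).symm

lemma expandP_self {n : ℕ} (p q : Fin (n+1)) (σ : Equiv.Perm (Fin n)) :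
    expandP p q σ p = q := by
  simp [expandP, finSuccEquiv'_at, finSuccEquiv'_symm_none]

lemma expandP_succAbove {n : ℕ} (p q : Fin (n+1)) (σ : Equiv.Perm (Fin n)) (x : Fin n) :
    expandP p q σ (p.succAbove x) = q.succAbove (σ x) := by
  simp [expandP, finSuccEquiv'_succAbove, finSuccEquiv'_symm_some]

def compressP {n : ℕ} (p : Fin (n+1)) (τ : Equiv.Perm (Fin (n+1))) : Equiv.Perm (Fin n) :=
  Equiv.removeNone (((finSuccEquiv' p).symm.trans τ).trans (finSuccEquiv' (τ p)))

lemma compressP_spec {n : ℕ} (p : Fin (n+1)) (τ : Equiv.Perm (Fin (n+1))) (x : Fin n) :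
    (τ p).succAbove (compressP p τ x) = τ (p.succAbove x) := by
  set e := ((finSuccEquiv' p).symm.trans τ).trans (finSuccEquiv' (τ p)) with he
  have hne : τ (p.succAbove x) ≠ τ p := by
    simp [EmbeddingLike.apply_eq_iff_eq, Fin.succAbove_ne]
  obtain ⟨z, hz⟩ := Fin.exists_succAbove_eq hne
  have hex : e (some x) = some z := by
    simp [he, finSuccEquiv'_symm_some, ← hz, finSuccEquiv'_succAbove]
  have := Equiv.removeNone_some (e := e) ⟨z, hex⟩
  rw [hex] at this
  have : compressP p τ x = z := by
    have h2 : (some (compressP p τ x) : Option (Fin n)) = some z := this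
    exact Option.some_injective _ h2
  rw [this, hz]

lemma expand_compress {n : ℕ} (p q : Fin (n+1)) (τ : Equiv.Perm (Fin (n+1)))
    (h : τ p = q) : expandP p q (compressP p τ) = τ := by
  subst h
  apply Equiv.ext
  intro y
  rcases eq_or_ne y p with rfl | h
  · rw [expandP_self]
  · obtain ⟨z, hz⟩ := Fin.exists_succAbove_eq h
    rw [← hz, expandP_succAbove, compressP_spec]

/-- prescribed successions condition -/
def condS (SN : Finset ℕ) {n : ℕ} (τ : Equiv.Perm (Fin n)) : Prop :=
  ∀ i : Fin n, (i : ℕ) ∈ SN → ∀ j : Fin n, (j : ℕ) = (i : ℕ) + 1 → (τ j : ℕ) = (τ i : ℕ) + 1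

/-- prescribed fixed points condition -/
def condF (SN : Finset ℕ) {n : ℕ} (σ : Equiv.Perm (Fin n)) : Prop :=
  ∀ i : Fin n, (i : ℕ) ∈ SN → σ i = i

instance (SN : Finset ℕ) (n : ℕ) (τ : Equiv.Perm (Fin n)) : Decidable (condS SN τ) := by
  unfold condS; infer_instance

instance (SN : Finset ℕ) (n : ℕ) (σ : Equiv.Perm (Fin n)) : Decidable (condF SN σ) := by
  unfold condF; infer_instance

lemma stepF (nn : ℕ) (SN : Finset ℕ) (p : Fin (nn+1)) (hmem : (p : ℕ) ∈ SN)
    (hmax : ∀ i ∈ SN, i ≤ (p : ℕ)) (hlt : (p : ℕ) < nn) :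
    ((univ : Finset (Equiv.Perm (Fin (nn+1)))).filter (fun σ => condF SN σ)).card =
    ((univ : Finset (Equiv.Perm (Fin nn))).filter (fun σ => condF (SN.erase (p : ℕ)) σ)).card := by
  refine (Finset.card_bij (fun σ _ => expandP p p σ) ?_ ?_ ?_).symm
  · -- membership
    intro σ hσ
    simp only [Finset.mem_filter, Finset.mem_univ, true_and] at hσ ⊢
    intro i hi
    rcases eq_or_ne i p with hip | hip
    · rw [hip, expandP_self]
    · have hivm : (i : ℕ) ≠ (p : ℕ) := fun h => hip (Fin.ext h)
      have hilt : (i : ℕ) < (p : ℕ) := lt_of_le_of_ne (hmax _ hi) hivm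
      have hibnd : (i : ℕ) < nn := by omega
      have hsa : p.succAbove ⟨(i : ℕ), hibnd⟩ = i := by
        apply Fin.ext
        have := succAbove_val p ⟨(i : ℕ), hibnd⟩
        rw [this]
        exact if_pos hilt
      have hfix : σ ⟨(i : ℕ), hibnd⟩ = ⟨(i : ℕ), hibnd⟩ :=
        hσ _ (Finset.mem_erase.mpr ⟨hivm, hi⟩)
      rw [← hsa, expandP_succAbove, hfix, hsa]
  · -- injectivity
    intro σ1 h1 σ2 h2 heq
    apply Equiv.ext
    intro x
    have := congrArg (fun τ : Equiv.Perm (Fin (nn+1)) => τ (p.succAbove x)) heq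
    simp only [expandP_succAbove] at this
    exact Fin.succAbove_right_injective this
  · -- surjectivity
    intro τ hτ
    simp only [Finset.mem_filter, Finset.mem_univ, true_and] at hτ
    have hτp : τ p = p := hτ p hmem
    refine ⟨compressP p τ, ?_, expand_compress p p τ hτp⟩
    simp only [Finset.mem_filter, Finset.mem_univ, true_and]
    intro x hx
    have hxSN : (x : ℕ) ∈ SN := Finset.mem_of_mem_erase hx
    have hxm : (x : ℕ) ≠ (p : ℕ) := Finset.ne_of_mem_erase hx
    have hxlt : (x : ℕ) < (p : ℕ) := lt_of_le_of_ne (hmax _ hxSN) hxm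
    have hxbnd : (x : ℕ) < nn + 1 := by omega
    have hsa : p.succAbove x = ⟨(x : ℕ), hxbnd⟩ := by
      apply Fin.ext
      rw [succAbove_val]
      exact if_pos hxlt
    have hfixi : τ ⟨(x : ℕ), hxbnd⟩ = ⟨(x : ℕ), hxbnd⟩ := hτ _ hxSN
    have hspec := compressP_spec p τ x
    rw [hτp, hsa, hfixi] at hspec
    have hval : (if (compressP p τ x : ℕ) < (p : ℕ) then (compressP p τ x : ℕ)
        else (compressP p τ x : ℕ) + 1) = (x : ℕ) := by
      have h := congrArg Fin.val hspec
      rw [succAbove_val] at h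
      exact h
    apply Fin.ext
    show (compressP p τ x : ℕ) = (x : ℕ)
    split_ifs at hval <;> omega

lemma stepS (nn : ℕ) (SN : Finset ℕ) (p : Fin (nn+1)) (m' : Fin nn)
    (hpm : (p : ℕ) = (m' : ℕ) + 1) (hmem : (m' : ℕ) ∈ SN)
    (hmax : ∀ i ∈ SN, i ≤ (m' : ℕ)) :
    ((univ : Finset (Equiv.Perm (Fin (nn+1)))).filter (fun τ => condS SN τ)).card =
    ((univ : Finset (Equiv.Perm (Fin nn))).filter (fun τ => condS (SN.erase (m' : ℕ)) τ)).card := by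
  refine (Finset.card_bij
    (fun σ _ => expandP p ⟨(σ m' : ℕ) + 1, Nat.succ_lt_succ (σ m').isLt⟩ σ) ?_ ?_ ?_).symm
  · -- membership
    intro σ hσ
    simp only [Finset.mem_filter, Finset.mem_univ, true_and] at hσ ⊢
    intro i hi j hj
    have hile : (i : ℕ) ≤ (m' : ℕ) := hmax _ hi
    rcases eq_or_ne (i : ℕ) (m' : ℕ) with him | him
    · -- top case
      have hjp : j = p := Fin.ext (by omega)
      have hsa : p.succAbove m' = i := by
        apply Fin.ext
        rw [succAbove_val, if_pos (by omega)]
        omega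
      have e1 : expandP p ⟨(σ m' : ℕ) + 1, Nat.succ_lt_succ (σ m').isLt⟩ σ i =
          (⟨(σ m' : ℕ) + 1, Nat.succ_lt_succ (σ m').isLt⟩ : Fin (nn+1)).succAbove (σ m') := by
        rw [← hsa, expandP_succAbove]
      have h2 : (((⟨(σ m' : ℕ) + 1, Nat.succ_lt_succ (σ m').isLt⟩ : Fin (nn+1)).succAbove
          (σ m') : Fin (nn+1)) : ℕ) = (σ m' : ℕ) := by
        rw [succAbove_val]
        exact if_pos (Nat.lt_succ_self _)
      rw [hjp, expandP_self, e1, h2]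
    · -- interior case
      have hilt : (i : ℕ) < (m' : ℕ) := lt_of_le_of_ne hile him
      have hibnd : (i : ℕ) < nn := by have := m'.isLt; omega
      have hi1bnd : (i : ℕ) + 1 < nn := by have := m'.isLt; omega
      have hsx : p.succAbove ⟨(i : ℕ), hibnd⟩ = i := by
        apply Fin.ext
        rw [succAbove_val]
        show (if (i : ℕ) < (p : ℕ) then (i : ℕ) else (i : ℕ) + 1) = (i : ℕ)
        rw [if_pos (by omega)]
      have e1 : expandP p ⟨(σ m' : ℕ) + 1, Nat.succ_lt_succ (σ m').isLt⟩ σ i =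
          (⟨(σ m' : ℕ) + 1, Nat.succ_lt_succ (σ m').isLt⟩ : Fin (nn+1)).succAbove
            (σ ⟨(i : ℕ), hibnd⟩) := by
        conv_lhs => rw [← hsx]
        rw [expandP_succAbove]
      have hsy : p.succAbove ⟨(i : ℕ) + 1, hi1bnd⟩ = j := by
        apply Fin.ext
        rw [succAbove_val]
        show (if (i : ℕ) + 1 < (p : ℕ) then (i : ℕ) + 1 else (i : ℕ) + 1 + 1) = (j : ℕ)
        rw [if_pos (by omega)]
        omega
      have e2 : expandP p ⟨(σ m' : ℕ) + 1, Nat.succ_lt_succ (σ m').isLt⟩ σ j =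
          (⟨(σ m' : ℕ) + 1, Nat.succ_lt_succ (σ m').isLt⟩ : Fin (nn+1)).succAbove
            (σ ⟨(i : ℕ) + 1, hi1bnd⟩) := by
        conv_lhs => rw [← hsy]
        rw [expandP_succAbove]
      have hcond : (σ ⟨(i : ℕ) + 1, hi1bnd⟩ : ℕ) = (σ ⟨(i : ℕ), hibnd⟩ : ℕ) + 1 :=
        hσ _ (Finset.mem_erase.mpr ⟨him, hi⟩) _ rfl
      have hxm' : (σ ⟨(i : ℕ), hibnd⟩ : ℕ) ≠ (σ m' : ℕ) := by
        intro h
        have h2 : (⟨(i : ℕ), hibnd⟩ : Fin nn) = m' := σ.injective (Fin.ext h)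
        exact him (congrArg Fin.val h2)
      rw [e1, e2, succAbove_val, succAbove_val]
      show (if (σ ⟨(i : ℕ) + 1, hi1bnd⟩ : ℕ) < (σ m' : ℕ) + 1 then (σ ⟨(i : ℕ) + 1, hi1bnd⟩ : ℕ)
          else (σ ⟨(i : ℕ) + 1, hi1bnd⟩ : ℕ) + 1) =
        (if (σ ⟨(i : ℕ), hibnd⟩ : ℕ) < (σ m' : ℕ) + 1 then (σ ⟨(i : ℕ), hibnd⟩ : ℕ)
          else (σ ⟨(i : ℕ), hibnd⟩ : ℕ) + 1) + 1
      split_ifs <;> omega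
  · -- injectivity
    intro σ1 h1 σ2 h2 heq
    have hq : (⟨(σ1 m' : ℕ) + 1, Nat.succ_lt_succ (σ1 m').isLt⟩ : Fin (nn+1)) =
        ⟨(σ2 m' : ℕ) + 1, Nat.succ_lt_succ (σ2 m').isLt⟩ := by
      have := congrArg (fun τ : Equiv.Perm (Fin (nn+1)) => τ p) heq
      simpa only [expandP_self] using this
    apply Equiv.ext
    intro x
    have := congrArg (fun τ : Equiv.Perm (Fin (nn+1)) => τ (p.succAbove x)) heq
    simp only [expandP_succAbove] at this
    rw [hq] at this
    exact Fin.succAbove_right_injective this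
  · -- surjectivity
    intro τ hτ
    simp only [Finset.mem_filter, Finset.mem_univ, true_and] at hτ
    have hmbnd : (m' : ℕ) < nn + 1 := by have := m'.isLt; omega
    have hsam : p.succAbove m' = ⟨(m' : ℕ), hmbnd⟩ := by
      apply Fin.ext
      rw [succAbove_val, if_pos (by omega)]
    have hsucc : (τ p : ℕ) = (τ ⟨(m' : ℕ), hmbnd⟩ : ℕ) + 1 :=
      hτ ⟨(m' : ℕ), hmbnd⟩ hmem p hpm
    have hspecm := compressP_spec p τ m'
    rw [hsam] at hspecm
    have hvm : (if (compressP p τ m' : ℕ) < (τ p : ℕ) then (compressP p τ m' : ℕ)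
        else (compressP p τ m' : ℕ) + 1) = (τ ⟨(m' : ℕ), hmbnd⟩ : ℕ) := by
      have h := congrArg Fin.val hspecm
      rw [succAbove_val] at h
      exact h
    have hσm : (compressP p τ m' : ℕ) + 1 = (τ p : ℕ) := by
      split_ifs at hvm <;> omega
    have hqτp : τ p = (⟨(compressP p τ m' : ℕ) + 1,
        Nat.succ_lt_succ (compressP p τ m').isLt⟩ : Fin (nn+1)) := Fin.ext hσm.symm
    refine ⟨compressP p τ, ?_, expand_compress p _ τ hqτp⟩
    simp only [Finset.mem_filter, Finset.mem_univ, true_and]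
    intro x hx j' hj'
    have hxSN : (x : ℕ) ∈ SN := Finset.mem_of_mem_erase hx
    have hxm : (x : ℕ) ≠ (m' : ℕ) := Finset.ne_of_mem_erase hx
    have hxlt : (x : ℕ) < (m' : ℕ) := lt_of_le_of_ne (hmax _ hxSN) hxm
    have hxbnd : (x : ℕ) < nn + 1 := by omega
    have hx1bnd : (x : ℕ) + 1 < nn + 1 := by have := m'.isLt; omega
    have hsi : p.succAbove x = ⟨(x : ℕ), hxbnd⟩ := by
      apply Fin.ext
      rw [succAbove_val, if_pos (by omega)]
    have hsj : p.succAbove j' = ⟨(x : ℕ) + 1, hx1bnd⟩ := by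
      apply Fin.ext
      rw [succAbove_val, if_pos (by rw [hj']; omega)]
      exact hj'
    have hcond : (τ ⟨(x : ℕ) + 1, hx1bnd⟩ : ℕ) = (τ ⟨(x : ℕ), hxbnd⟩ : ℕ) + 1 :=
      hτ _ hxSN _ rfl
    have hip : (τ ⟨(x : ℕ), hxbnd⟩ : ℕ) ≠ (τ p : ℕ) := by
      intro h
      have h2 := congrArg Fin.val (τ.injective (Fin.ext h))
      show False
      have h3 : (x : ℕ) = (p : ℕ) := h2
      omega
    have hjp : (τ ⟨(x : ℕ) + 1, hx1bnd⟩ : ℕ) ≠ (τ p : ℕ) := by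
      intro h
      have h2 := congrArg Fin.val (τ.injective (Fin.ext h))
      have h3 : (x : ℕ) + 1 = (p : ℕ) := h2
      omega
    have hsp1 := compressP_spec p τ x
    have hsp2 := compressP_spec p τ j'
    rw [hsi] at hsp1
    rw [hsj] at hsp2
    have hv1 : (if (compressP p τ x : ℕ) < (τ p : ℕ) then (compressP p τ x : ℕ)
        else (compressP p τ x : ℕ) + 1) = (τ ⟨(x : ℕ), hxbnd⟩ : ℕ) := by
      have h := congrArg Fin.val hsp1
      rw [succAbove_val] at h
      exact h
    have hv2 : (if (compressP p τ j' : ℕ) < (τ p : ℕ) then (compressP p τ j' : ℕ)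
        else (compressP p τ j' : ℕ) + 1) = (τ ⟨(x : ℕ) + 1, hx1bnd⟩ : ℕ) := by
      have h := congrArg Fin.val hsp2
      rw [succAbove_val] at h
      exact h
    show (compressP p τ j' : ℕ) = (compressP p τ x : ℕ) + 1
    split_ifs at hv1 hv2 <;> omega


lemma countF : ∀ (k n : ℕ) (SN : Finset ℕ), SN.card = k → (∀ i ∈ SN, i + 1 < n) →
    ((univ : Finset (Equiv.Perm (Fin n))).filter (fun σ => condF SN σ)).card =
      Nat.factorial (n - k) := by
  intro k
  induction k with
  | zero =>
    intro n SN hcard _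
    rw [Finset.card_eq_zero] at hcard
    subst hcard
    rw [Finset.filter_true_of_mem (fun σ _ => by intro i hi; simp at hi)]
    simp [Fintype.card_perm]
  | succ k IH =>
    intro n SN hcard hb
    have hne : SN.Nonempty := Finset.card_pos.mp (by omega)
    have hmem : SN.max' hne ∈ SN := SN.max'_mem hne
    have hmn : SN.max' hne + 1 < n := hb _ hmem
    obtain ⟨nn, rfl⟩ : ∃ nn, n = nn + 1 := ⟨n - 1, by omega⟩
    have hlt : SN.max' hne < nn := by omega
    have hstep := stepF nn SN ⟨SN.max' hne, by omega⟩ hmem (fun i hi => SN.le_max' i hi) hlt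
    rw [hstep, IH nn (SN.erase (SN.max' hne))
      (by rw [Finset.card_erase_of_mem hmem]; omega)
      (fun i hi => by
        have h1 := Finset.mem_of_mem_erase hi
        have h2 := Finset.ne_of_mem_erase hi
        have := SN.le_max' i h1
        omega)]
    congr 1
    omega

lemma countS : ∀ (k n : ℕ) (SN : Finset ℕ), SN.card = k → (∀ i ∈ SN, i + 1 < n) →
    ((univ : Finset (Equiv.Perm (Fin n))).filter (fun τ => condS SN τ)).card =
      Nat.factorial (n - k) := by
  intro k
  induction k with
  | zero =>
    intro n SN hcard _
    rw [Finset.card_eq_zero] at hcard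
    subst hcard
    rw [Finset.filter_true_of_mem (fun σ _ => by intro i hi; simp at hi)]
    simp [Fintype.card_perm]
  | succ k IH =>
    intro n SN hcard hb
    have hne : SN.Nonempty := Finset.card_pos.mp (by omega)
    have hmem : SN.max' hne ∈ SN := SN.max'_mem hne
    have hmn : SN.max' hne + 1 < n := hb _ hmem
    obtain ⟨nn, rfl⟩ : ∃ nn, n = nn + 1 := ⟨n - 1, by omega⟩
    have hlt : SN.max' hne < nn := by omega
    have hstep := stepS nn SN ⟨SN.max' hne + 1, by omega⟩ ⟨SN.max' hne, hlt⟩ rfl hmem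
      (fun i hi => SN.le_max' i hi)
    rw [hstep, IH nn (SN.erase (SN.max' hne))
      (by rw [Finset.card_erase_of_mem hmem]; omega)
      (fun i hi => by
        have h1 := Finset.mem_of_mem_erase hi
        have h2 := Finset.ne_of_mem_erase hi
        have := SN.le_max' i h1
        omega)]
    congr 1
    omega

/-- generic inclusion–exclusion -/
lemma IE {α : Type*} [Fintype α] {ι : Type*} [Fintype ι] [DecidableEq ι]
    (F : α → Finset ι) :
    (((univ : Finset α).filter (fun x => F x = ∅)).card : ℤ) =
      ∑ S ∈ (univ : Finset ι).powerset,
        (-1 : ℤ) ^ S.card * (((univ : Finset α).filter (fun x => S ⊆ F x)).card : ℤ) := by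
  classical
  have key : ∀ x : α,
      (∑ S ∈ (univ : Finset ι).powerset,
        (-1 : ℤ) ^ S.card * (if S ⊆ F x then (1 : ℤ) else 0)) =
      (if F x = ∅ then (1 : ℤ) else 0) := by
    intro x
    have h1 : (∑ S ∈ (univ : Finset ι).powerset,
          (-1 : ℤ) ^ S.card * (if S ⊆ F x then (1 : ℤ) else 0))
        = ∑ S ∈ ((univ : Finset ι).powerset.filter (fun S => S ⊆ F x)), (-1 : ℤ) ^ S.card := by
      rw [Finset.sum_filter]
      refine Finset.sum_congr rfl fun S _ => ?_
      split_ifs <;> ring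
    have h2 : (univ : Finset ι).powerset.filter (fun S => S ⊆ F x) = (F x).powerset := by
      ext S
      simp [Finset.mem_powerset]
    rw [h1, h2, Finset.sum_powerset_neg_one_pow_card]
  have hcast : ∀ (p : α → Prop) (_ : DecidablePred p),
      (((univ : Finset α).filter p).card : ℤ) = ∑ x : α, (if p x then (1 : ℤ) else 0) := by
    intro p hp
    rw [Finset.card_filter]
    push_cast
    rfl
  calc (((univ : Finset α).filter (fun x => F x = ∅)).card : ℤ)
      = ∑ x : α, (if F x = ∅ then (1 : ℤ) else 0) := hcast _ _
    _ = ∑ x : α, ∑ S ∈ (univ : Finset ι).powerset,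
          (-1 : ℤ) ^ S.card * (if S ⊆ F x then (1 : ℤ) else 0) := by
        exact Finset.sum_congr rfl fun x _ => (key x).symm
    _ = ∑ S ∈ (univ : Finset ι).powerset, ∑ x : α,
          (-1 : ℤ) ^ S.card * (if S ⊆ F x then (1 : ℤ) else 0) := Finset.sum_comm
    _ = ∑ S ∈ (univ : Finset ι).powerset,
          (-1 : ℤ) ^ S.card * (((univ : Finset α).filter (fun x => S ⊆ F x)).card : ℤ) := by
        refine Finset.sum_congr rfl fun S _ => ?_
        rw [← Finset.mul_sum, hcast _ _]

end DEGaux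

namespace DEGaux

lemma keyS (n : ℕ) (S : Finset (Fin n)) :
    ((univ : Finset (Equiv.Perm (Fin n))).filter (fun τ => S ⊆ Suc τ)).card =
    ((univ : Finset (Equiv.Perm (Fin n))).filter (fun σ => S ⊆ Fixbar σ)).card := by
  classical
  by_cases hS : ∀ i ∈ S, (i : ℕ) + 1 < n
  · have h1 : ∀ τ : Equiv.Perm (Fin n), (S ⊆ Suc τ) ↔ condS (S.image Fin.val) τ := by
      intro τ
      constructor
      · intro h i hival j hjval
        obtain ⟨i₀, hi₀S, hi₀v⟩ := Finset.mem_image.mp hival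
        have hi₀ : i₀ = i := Fin.ext hi₀v
        subst hi₀
        have := h hi₀S
        rw [Suc, Finset.mem_filter] at this
        obtain ⟨-, j₀, hj₀v, hsucc⟩ := this
        have : j₀ = j := Fin.ext (by omega)
        subst this
        omega
      · intro h i hi
        rw [Suc, Finset.mem_filter]
        refine ⟨Finset.mem_univ _, ⟨(i : ℕ) + 1, hS i hi⟩, rfl, ?_⟩
        have := h i (Finset.mem_image_of_mem Fin.val hi) ⟨(i : ℕ) + 1, hS i hi⟩ rfl
        omega
    have h2 : ∀ σ : Equiv.Perm (Fin n), (S ⊆ Fixbar σ) ↔ condF (S.image Fin.val) σ := by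
      intro σ
      constructor
      · intro h i hival
        obtain ⟨i₀, hi₀S, hi₀v⟩ := Finset.mem_image.mp hival
        have hi₀ : i₀ = i := Fin.ext hi₀v
        subst hi₀
        have := h hi₀S
        rw [Fixbar, Finset.mem_filter] at this
        exact this.2.2
      · intro h i hi
        rw [Fixbar, Finset.mem_filter]
        exact ⟨Finset.mem_univ _, hS i hi, h i (Finset.mem_image_of_mem Fin.val hi)⟩
    rw [Finset.filter_congr (fun τ _ => h1 τ), Finset.filter_congr (fun σ _ => h2 σ)]
    rw [countS (S.image Fin.val).card n (S.image Fin.val) rfl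
        (fun i hi => by
          obtain ⟨i₀, hi₀S, rfl⟩ := Finset.mem_image.mp hi
          exact hS i₀ hi₀S),
      countF (S.image Fin.val).card n (S.image Fin.val) rfl
        (fun i hi => by
          obtain ⟨i₀, hi₀S, rfl⟩ := Finset.mem_image.mp hi
          exact hS i₀ hi₀S)]
  · push_neg at hS
    obtain ⟨i, hiS, hge⟩ := hS
    rw [Finset.filter_false_of_mem, Finset.filter_false_of_mem]
    · intro σ _ h
      have := h hiS
      rw [Fixbar, Finset.mem_filter] at this
      omega
    · intro τ _ h
      have := h hiS
      rw [Suc, Finset.mem_filter] at this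
      obtain ⟨-, j, hjv, -⟩ := this
      have := j.isLt
      omega

end DEGaux


/-- The number of permutations of [n] with no succession equals the number of
permutations of [n] with no fixed point among the first n-1 positions. -/
theorem stmt_7 (n : ℕ) :
    ((Finset.univ : Finset (Equiv.Perm (Fin n))).filter (fun σ => Suc σ = ∅)).card =
    ((Finset.univ : Finset (Equiv.Perm (Fin n))).filter (fun σ => Fixbar σ = ∅)).card := by
  have hA := DEGaux.IE (fun τ : Equiv.Perm (Fin n) => Suc τ)
  have hB := DEGaux.IE (fun σ : Equiv.Perm (Fin n) => Fixbar σ)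
  have hZ : (((Finset.univ : Finset (Equiv.Perm (Fin n))).filter
        (fun σ => Suc σ = ∅)).card : ℤ) =
      (((Finset.univ : Finset (Equiv.Perm (Fin n))).filter
        (fun σ => Fixbar σ = ∅)).card : ℤ) := by
    rw [hA, hB]
    refine Finset.sum_congr rfl fun S _ => ?_
    rw [DEGaux.keyS n S]
  exact_mod_cast hZ
end
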